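/- Let Γ be a set (in the paper, Γ is the Cantor set), let 0 < ε < r, and set M(r,ε) = {x ∈ ℓ₁(Γ) : r − ε < ‖x‖ ≤ r}. Then for every x ∈ M(r,ε) there exists a set V ⊆ ℓ₁(Γ) that is open in the topology of pointwise convergence (in particular, weakly open) such that x ∈ V and ‖y₁ − y₂‖ ≤ 4ε for all y₁, y₂ ∈ V ∩ M(r,ε) (i.e., the norm diameter of V ∩ M(r,ε) is at most 4ε). -/

import Mathlib

open TopologicalSpace Filter Set

/-- A family `N` of subsets of a topological space `X` is a *k-network* if whenever `K ⊆ U`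
with `K` compact and `U` open, there is a finite subfamily `F ⊆ N` with `K ⊆ ⋃₀ F ⊆ U`. -/
def IsKNetwork {X : Type*} [TopologicalSpace X] (N : Set (Set X)) : Prop :=
  ∀ K U : Set X, IsCompact K → IsOpen U → K ⊆ U →
    ∃ F : Set (Set X), F ⊆ N ∧ F.Finite ∧ K ⊆ ⋃₀ F ∧ ⋃₀ F ⊆ U

/-- A family `N` of subsets of `X` is a *network* if for every `x` and every open `U ∋ x`
there is `A ∈ N` with `x ∈ A ⊆ U`. -/
def IsNetwork {X : Type*} [TopologicalSpace X] (N : Set (Set X)) : Prop :=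
  ∀ (x : X) (U : Set X), IsOpen U → x ∈ U → ∃ A ∈ N, x ∈ A ∧ A ⊆ U

/-- A family of subsets is *locally finite* if every point has a neighbourhood meeting
only finitely many of its members. -/
def IsLocallyFiniteFamily {X : Type*} [TopologicalSpace X] (N : Set (Set X)) : Prop :=
  ∀ x : X, ∃ V ∈ nhds x, {A ∈ N | (A ∩ V).Nonempty}.Finite

/-- A family of subsets is *σ-locally finite* if it is a countable union of locally finite
families. -/
def IsSigmaLocallyFinite {X : Type*} [TopologicalSpace X] (N : Set (Set X)) : Prop :=
  ∃ f : ℕ → Set (Set X), (∀ n, IsLocallyFiniteFamily (f n)) ∧ N = ⋃ n, f n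

/-- An *ℵ-space* is a regular Hausdorff space with a σ-locally finite k-network. -/
def IsAlephSpace (X : Type*) [TopologicalSpace X] : Prop :=
  RegularSpace X ∧ T2Space X ∧ ∃ N : Set (Set X), IsSigmaLocallyFinite N ∧ IsKNetwork N

/-- An *ℵ₀-space* is a regular Hausdorff space with a countable k-network. -/
def IsAleph0Space (X : Type*) [TopologicalSpace X] : Prop :=
  RegularSpace X ∧ T2Space X ∧ ∃ N : Set (Set X), N.Countable ∧ IsKNetwork N

/-- In `ℓ₁(Γ)`, for `0 < ε < r` and `M(r,ε) = {x : r - ε < ‖x‖ ≤ r}`, every `x ∈ M(r,ε)`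
has a pointwise-open (hence weakly open) neighbourhood `V` with
`diam (V ∩ M(r,ε)) ≤ 4ε` in norm. -/

lemma lp_one_hasSum (Γ : Type) (f : lp (fun _ : Γ => ℝ) 1) :
    HasSum (fun γ => ‖f γ‖) ‖f‖ := by
  have := lp.hasSum_norm (p := 1) (by norm_num) f
  simpa using this

lemma lp_one_key (Γ : Type) (x y : lp (fun _ : Γ => ℝ) 1) (F : Finset Γ) :
    ‖y - x‖ ≤ (∑ γ ∈ F, ‖y γ - x γ‖) + (‖y‖ - ∑ γ ∈ F, ‖y γ‖) + (‖x‖ - ∑ γ ∈ F, ‖x γ‖) := by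
  have hy := lp_one_hasSum Γ y
  have hx := lp_one_hasSum Γ x
  have hd := lp_one_hasSum Γ (y - x)
  have hcoe : ∀ γ : Γ, (y - x) γ = y γ - x γ := fun γ => rfl
  have hysum : Summable (fun γ => ‖y γ‖) := hy.summable
  have hxsum : Summable (fun γ => ‖x γ‖) := hx.summable
  have hdsum : Summable (fun γ => ‖y γ - x γ‖) := by
    simpa [hcoe] using hd.summable
  have h1 := Summable.sum_add_tsum_subtype_compl hdsum F
  have h2 := Summable.sum_add_tsum_subtype_compl hysum F
  have h3 := Summable.sum_add_tsum_subtype_compl hxsum F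
  have hdt : (∑' γ, ‖y γ - x γ‖) = ‖y - x‖ := by
    rw [← hd.tsum_eq]; exact tsum_congr fun γ => by rw [hcoe]
  have hyt : (∑' γ, ‖y γ‖) = ‖y‖ := hy.tsum_eq
  have hxt : (∑' γ, ‖x γ‖) = ‖x‖ := hx.tsum_eq
  have htail : (∑' γ : { γ // γ ∉ F }, ‖y γ - x γ‖) ≤
      (∑' γ : { γ // γ ∉ F }, ‖y γ‖) + (∑' γ : { γ // γ ∉ F }, ‖x γ‖) := by
    have hys : Summable fun γ : { γ // γ ∉ F } => ‖y γ.1‖ := hysum.subtype _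
    have hxs : Summable fun γ : { γ // γ ∉ F } => ‖x γ.1‖ := hxsum.subtype _
    have hds : Summable fun γ : { γ // γ ∉ F } => ‖y γ.1 - x γ.1‖ := hdsum.subtype _
    rw [← Summable.tsum_add hys hxs]
    exact Summable.tsum_le_tsum (fun γ => norm_sub_le _ _) hds (hys.add hxs)
  rw [hdt] at h1; rw [hyt] at h2; rw [hxt] at h3
  linarith

theorem ellOne_annulus_small_pointwise_nbhd (Γ : Type) (r ε : ℝ) (hε : 0 < ε) (hεr : ε < r)
    (x : lp (fun _ : Γ => ℝ) 1) (hx₁ : r - ε < ‖x‖) (hx₂ : ‖x‖ ≤ r) :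
    ∃ V : Set (lp (fun _ : Γ => ℝ) 1),
      (∃ W : Set (Γ → ℝ), IsOpen W ∧ V = (fun z : lp (fun _ : Γ => ℝ) 1 => ⇑z) ⁻¹' W) ∧
      x ∈ V ∧
      ∀ y₁ ∈ V, ∀ y₂ ∈ V, r - ε < ‖y₁‖ → ‖y₁‖ ≤ r → r - ε < ‖y₂‖ → ‖y₂‖ ≤ r →
        ‖y₁ - y₂‖ ≤ 4 * ε := by
  obtain ⟨F, hF⟩ : ∃ F : Finset Γ, ‖x‖ - ε / 4 < ∑ γ ∈ F, ‖x γ‖ := by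
    have h := lp_one_hasSum Γ x
    exact (h.eventually (eventually_gt_nhds (by linarith))).exists
  set δ : ℝ := ε / 4 / (F.card + 1) with hδ
  have hδpos : 0 < δ := by positivity
  have hδcard : (F.card : ℝ) * δ ≤ ε / 4 := by
    rw [hδ]
    have h1 : (F.card : ℝ) / (F.card + 1) ≤ 1 := by
      rw [div_le_one (by positivity)]; linarith
    calc (F.card : ℝ) * (ε / 4 / (F.card + 1)) = ε / 4 * ((F.card : ℝ) / (F.card + 1)) := by
          ring
      _ ≤ ε / 4 * 1 := mul_le_mul_of_nonneg_left h1 (by positivity)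
      _ = ε / 4 := mul_one _
  refine ⟨_, ⟨{g : Γ → ℝ | ∀ γ ∈ F, |g γ - x γ| < δ}, ?_, rfl⟩, ?_, ?_⟩
  · have heq : {g : Γ → ℝ | ∀ γ ∈ F, |g γ - x γ| < δ}
        = ⋂ γ ∈ F, {g : Γ → ℝ | |g γ - x γ| < δ} := by
      ext g; simp
    rw [heq]
    exact isOpen_biInter_finset fun γ _ =>
      isOpen_lt (((continuous_apply γ).sub continuous_const).abs) continuous_const
  · intro γ _; simpa using hδpos
  · have key : ∀ y : lp (fun _ : Γ => ℝ) 1, (∀ γ ∈ F, |y γ - x γ| < δ) →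
        r - ε < ‖y‖ → ‖y‖ ≤ r → ‖y - x‖ ≤ 2 * ε := by
      intro y hy hylow hyhi
      have hb := lp_one_key Γ x y F
      have hsum : ∑ γ ∈ F, ‖y γ - x γ‖ ≤ ε / 4 := by
        calc ∑ γ ∈ F, ‖y γ - x γ‖ ≤ ∑ _γ ∈ F, δ :=
              Finset.sum_le_sum fun γ hγ => by
                rw [Real.norm_eq_abs]; exact (hy γ hγ).le
          _ = (F.card : ℝ) * δ := by simp [mul_comm]
          _ ≤ ε / 4 := hδcard
      have hxy : ∑ γ ∈ F, ‖x γ‖ ≤ (∑ γ ∈ F, ‖y γ‖) + ∑ γ ∈ F, ‖y γ - x γ‖ := by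
        rw [← Finset.sum_add_distrib]
        refine Finset.sum_le_sum fun γ _ => ?_
        have h1 : ‖x γ‖ - ‖y γ‖ ≤ ‖x γ - y γ‖ := norm_sub_norm_le _ _
        have h2 : ‖x γ - y γ‖ = ‖y γ - x γ‖ := norm_sub_rev _ _
        linarith
      have hysum : ‖y‖ - ∑ γ ∈ F, ‖y γ‖ ≤ 3 / 2 * ε := by linarith
      linarith
    intro y₁ hy₁ y₂ hy₂ h₁ h₂ h₃ h₄
    have k₁ := key y₁ hy₁ h₁ h₂
    have k₂ := key y₂ hy₂ h₃ h₄
    have : ‖y₁ - y₂‖ ≤ ‖y₁ - x‖ + ‖x - y₂‖ := norm_sub_le_norm_sub_add_norm_sub _ _ _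
    have h5 : ‖x - y₂‖ = ‖y₂ - x‖ := norm_sub_rev _ _
    linarith
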